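/- arXiv:1902.06039 — 2 statements merged into one kernel-verified Lean document; each statement's English description precedes it below -/
import Mathlib

section
/- Let V be a finite set of 'unassigned' variables with a distinguished element c ∈ V, and let W be a finite set of 'ancestor' variables disjoint from V. For each v ∈ V ∪ W let D_v be a finite nonempty type, and fix an assignment σ_l ∈ D_l for each l ∈ W. For each j ∈ V, let AP(j) ⊆ V ∪ W and C(j) ⊆ V be finite sets of indices, let PP(j) ⊆ AP(j), and suppose a distinguished ancestor i ∈ W with a fixed value σ_i ∈ D_i. Suppose given nonnegative cost functions f_{jl} : D_j × D_l → ℝ for all relevant pairs, and a nonnegative function f_ic : D_i × D_c → ℝ. Then min over x ∈ ∏_{v ∈ V} D_v of [ Σ_{j ∈ V \ {c}} ( Σ_{l ∈ AP(j) ∩ W} f_{jl}(x_j, σ_l) + Σ_{l ∈ AP(j) ∩ V} f_{jl}(x_j, x_l) + Σ_{l ∈ C(j)} f_{jl}(x_j, x_l) ) + Σ_{l ∈ AP(c) ∩ W} f_{cl}(x_c, σ_l) + Σ_{l ∈ C(c)} f_{cl}(x_c, x_l) + f_ic(σ_i, x_c) ] ≥ Σ_{j ∈ V \ {c}} min_{x_j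 ∈ D_j} ( Σ_{l ∈ PP(j) ∩ W} f_{jl}(x_j, σ_l) ) + min_{x_c ∈ D_c} ( Σ_{l ∈ AP(c) ∩ W} f_{cl}(x_c, σ_l) ). -/
/-- Property 4.1 of PT-ISABB: the initial lower bound computed by the
non-local-elimination inference phase with unlimited dimension limit
(the left-hand minimization of the full aggregated one-sided subtree cost)
is at least as large as the AsymPT-FB lower bound (the right-hand sum of
independent per-variable minima of the best single-side local costs under
the current partial assignment `σ`).

Here `V` is the set consisting of agent `c` and its descendants, `W` is the
disjoint set of ancestors with fixed assignments `σ`, `AP j` are `j`'s parent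
and pseudo parents, `PP j ⊆ AP j` are the pseudo parents, `C j` are `j`'s
children, and `i ∈ W` is `c`'s parent with parent-side function `fic`.
The minimization is over assignments `x` to the variables in `V` (the
objective only depends on the coordinates of `x` in `V`). -/
theorem inference_lb_ge_asympt_fb_lb {I : Type*} [Fintype I] [DecidableEq I]
    (V W : Finset I) (hVW : Disjoint V W)
    (c : I) (hc : c ∈ V)
    (D : I → Type*) [∀ v, Fintype (D v)] [∀ v, Nonempty (D v)]
    (σ : ∀ l, D l)
    (AP C PP : I → Finset I)
    (hAP : ∀ j, AP j ⊆ V ∪ W) (hC : ∀ j, C j ⊆ V) (hPP : ∀ j, PP j ⊆ AP j)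
    (i : I) (hi : i ∈ W)
    (f : ∀ j l, D j → D l → ℝ) (hf : ∀ j l xj xl, 0 ≤ f j l xj xl)
    (fic : D i → D c → ℝ) (hfic : ∀ xi xc, 0 ≤ fic xi xc) :
    Finset.univ.inf' Finset.univ_nonempty (fun x : ∀ v, D v =>
        (∑ j ∈ V \ {c},
            ((∑ l ∈ AP j ∩ W, f j l (x j) (σ l))
              + (∑ l ∈ AP j ∩ V, f j l (x j) (x l))
              + (∑ l ∈ C j, f j l (x j) (x l))))
          + (∑ l ∈ AP c ∩ W, f c l (x c) (σ l))
          + (∑ l ∈ C c, f c l (x c) (x l))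
          + fic (σ i) (x c))
      ≥ (∑ j ∈ V \ {c},
            Finset.univ.inf' Finset.univ_nonempty
              (fun xj : D j => ∑ l ∈ PP j ∩ W, f j l xj (σ l)))
          + Finset.univ.inf' Finset.univ_nonempty
              (fun xc : D c => ∑ l ∈ AP c ∩ W, f c l xc (σ l)) := by
  apply Finset.le_inf'
  intro x _
  have h1 : ∀ j ∈ V \ {c},
      Finset.univ.inf' Finset.univ_nonempty
        (fun xj : D j => ∑ l ∈ PP j ∩ W, f j l xj (σ l))
      ≤ (∑ l ∈ AP j ∩ W, f j l (x j) (σ l))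
          + (∑ l ∈ AP j ∩ V, f j l (x j) (x l))
          + (∑ l ∈ C j, f j l (x j) (x l)) := by
    intro j _
    have h2 : (∑ l ∈ PP j ∩ W, f j l (x j) (σ l))
        ≤ ∑ l ∈ AP j ∩ W, f j l (x j) (σ l) := by
      apply Finset.sum_le_sum_of_subset_of_nonneg
      · exact Finset.inter_subset_inter_right (hPP j)
      · intro l _ _; exact hf _ _ _ _
    calc Finset.univ.inf' Finset.univ_nonempty
          (fun xj : D j => ∑ l ∈ PP j ∩ W, f j l xj (σ l))
        ≤ ∑ l ∈ PP j ∩ W, f j l (x j) (σ l) :=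
          Finset.inf'_le _ (Finset.mem_univ _)
      _ ≤ ∑ l ∈ AP j ∩ W, f j l (x j) (σ l) := h2
      _ ≤ _ := by
          have := Finset.sum_nonneg (fun l _ => hf j l (x j) (x l) :
            ∀ l ∈ AP j ∩ V, 0 ≤ f j l (x j) (x l))
          have := Finset.sum_nonneg (fun l _ => hf j l (x j) (x l) :
            ∀ l ∈ C j, 0 ≤ f j l (x j) (x l))
          linarith
  have hA : (∑ j ∈ V \ {c},
      Finset.univ.inf' Finset.univ_nonempty
        (fun xj : D j => ∑ l ∈ PP j ∩ W, f j l xj (σ l)))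
      ≤ ∑ j ∈ V \ {c},
        ((∑ l ∈ AP j ∩ W, f j l (x j) (σ l))
          + (∑ l ∈ AP j ∩ V, f j l (x j) (x l))
          + (∑ l ∈ C j, f j l (x j) (x l))) :=
    Finset.sum_le_sum h1
  have hB : Finset.univ.inf' Finset.univ_nonempty
      (fun xc : D c => ∑ l ∈ AP c ∩ W, f c l xc (σ l))
      ≤ ∑ l ∈ AP c ∩ W, f c l (x c) (σ l) :=
    Finset.inf'_le _ (Finset.mem_univ _)
  have hC' : 0 ≤ ∑ l ∈ C c, f c l (x c) (x l) :=
    Finset.sum_nonneg (fun l _ => hf _ _ _ _)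
  have hic := hfic (σ i) (x c)
  linarith
end

section
/- Let V be a finite type of nodes equipped with a parent map p : V → Option V such that the relation 'u is the parent of v' is well-founded (so p determines a finite rooted forest, and the ancestor relation is the transitive closure of the parent relation). For each v ∈ V let D_v be a finite nonempty type; let AP(v) be a finite set of ancestors of v that contains the parent of v whenever it exists, and let C(v) = { c : p(c) = v } be the children of v. For each v and each u ∈ AP(v), let f_{vu} : D_v × D_u → ℝ and f_{uv} : D_u × D_v → ℝ be nonnegative cost functions. For an assignment y assigning y_w ∈ D_w to every node w, define recursively (by well-founded recursion on the forest): util_v(y) = Σ_{u ∈ AP(v)} f_{vu}(y_v, y_u) + Σ_{c ∈ C(v)} ChildUtil_v^c(y), where ChildUtil_v^c(y) = min_{x_c ∈ D_c} ( f_{vc}(y_v, x_c) + util_c(y[x_c/c]) ) and y[x_c/c] denotes y with the value at c replaced by x_c (note util_c depends only on the values of c, its subtree, and its ancestors). Also define the true two-sided subtree cost cost_c(y) = Σ_{j in the subtree rooted at c} Σ_{u ∈ AP(j)} ( f_{ju}(y_j, y_u) + f_{uj}(y_u, y_j) ). Then for every node v, every child c ∈ C(v), and every full assignment y, cost_c(y)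 ≥ ChildUtil_v^c(y). -/
section ChildUtilAux

open scoped Classical

variable {V : Type*} [Fintype V] [DecidableEq V] (p : V → Option V)

private lemma cu_noloop (hwf : WellFounded (fun u v : V => p v = some u)) (c : V) :
    ¬ Relation.TransGen (fun a b : V => p a = some b) c c := by
  intro h
  exact (hwf.transGen.isIrrefl).irrefl _ h.swap

private lemma cu_compare {j a b : V}
    (h1 : Relation.ReflTransGen (fun a b : V => p a = some b) j a)
    (h2 : Relation.ReflTransGen (fun a b : V => p a = some b) j b) :
    Relation.ReflTransGen (fun a b : V => p a = some b) a b ∨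
      Relation.ReflTransGen (fun a b : V => p a = some b) b a := by
  induction h1 using Relation.ReflTransGen.head_induction_on generalizing b with
  | refl => exact Or.inl h2
  | head hstep htail ih =>
    rcases h2.cases_head with rfl | ⟨x', hx', h2'⟩
    · exact Or.inr (Relation.ReflTransGen.head hstep htail)
    · cases (Option.some.inj (hstep.symm.trans hx'))
      exact ih h2'

/-- the subtree rooted at `c` -/
private noncomputable def cuS (c : V) : Finset V :=
  Finset.univ.filter (fun j => Relation.ReflTransGen (fun a b : V => p a = some b) j c)

private lemma cu_mem_self (c : V) : c ∈ cuS p c := by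
  simp [cuS]
  exact Relation.ReflTransGen.refl

private lemma cu_subset (hwf : WellFounded (fun u v : V => p v = some u))
    {c c' : V} (h : p c' = some c) : cuS p c' ⊆ (cuS p c).erase c := by
  intro j hj
  simp only [cuS, Finset.mem_filter, Finset.mem_univ, true_and] at hj
  rw [Finset.mem_erase]
  refine ⟨?_, ?_⟩
  · rintro rfl
    exact cu_noloop p hwf _ (Relation.TransGen.tail' hj h)
  · simp only [cuS, Finset.mem_filter, Finset.mem_univ, true_and]
    exact hj.tail h

private lemma cu_disj (hwf : WellFounded (fun u v : V => p v = some u))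
    {c c1 c2 : V} (h1 : p c1 = some c) (h2 : p c2 = some c) (hne : c1 ≠ c2) :
    Disjoint (cuS p c1) (cuS p c2) := by
  rw [Finset.disjoint_left]
  intro j hj1 hj2
  simp only [cuS, Finset.mem_filter, Finset.mem_univ, true_and] at hj1 hj2
  rcases cu_compare p hj1 hj2 with h | h
  · rcases h.cases_head with rfl | ⟨x, hx, h'⟩
    · exact hne rfl
    · cases (Option.some.inj (h1.symm.trans hx))
      exact cu_noloop p hwf c (Relation.TransGen.tail' h' h2)
  · rcases h.cases_head with rfl | ⟨x, hx, h'⟩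
    · exact hne rfl
    · cases (Option.some.inj (h2.symm.trans hx))
      exact cu_noloop p hwf c (Relation.TransGen.tail' h' h1)

end ChildUtilAux

open scoped Classical in
/-- General tree-recursive form of Lemma 4.2 (PT-ISABB, inference phase with
`k = ∞`): on a finite rooted forest given by a parent map `p` (with
well-founded parent relation), where each agent `v` is constrained with a set
`AP v` of its ancestors (containing its parent) through nonnegative one-sided
cost functions `f`, the bottom-up one-sided utility `util` (with non-local
elimination of each child `c` by its parent `v`, producing `ChildUtil v c`)
yields, for every child `c` of `v` and every full assignment `y`, a lower
bound `ChildUtil v c y` on the true two-sided cost of the subtree rooted at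
`c`. -/
theorem childutil_le_subtree_cost {V : Type*} [Fintype V] [DecidableEq V]
    (p : V → Option V)
    (hwf : WellFounded (fun u v => p v = some u))
    (D : V → Type*) [∀ v, Fintype (D v)] [∀ v, Nonempty (D v)]
    (AP : V → Finset V)
    (hAPanc : ∀ v, ∀ u ∈ AP v, Relation.TransGen (fun a b => p a = some b) v u)
    (hAPparent : ∀ v u, p v = some u → u ∈ AP v)
    (f : ∀ v u, D v → D u → ℝ) (hf : ∀ v u xv xu, 0 ≤ f v u xv xu)
    (util : ∀ _ : V, (∀ w, D w) → ℝ)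
    (ChildUtil : V → V → (∀ w, D w) → ℝ)
    (hutil : ∀ v y, util v y
        = (∑ u ∈ AP v, f v u (y v) (y u))
          + ∑ c ∈ Finset.univ.filter (fun c => p c = some v), ChildUtil v c y)
    (hchild : ∀ v c y, ChildUtil v c y
        = Finset.univ.inf' Finset.univ_nonempty
            (fun xc : D c => f v c (y v) xc + util c (Function.update y c xc))) :
    ∀ (v c : V), p c = some v → ∀ y : ∀ w, D w,
      (∑ j ∈ Finset.univ.filter
            (fun j => Relation.ReflTransGen (fun a b => p a = some b) j c),
          ∑ u ∈ AP j, (f j u (y j) (y u) + f u j (y u) (y j)))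
        ≥ ChildUtil v c y := by
  -- abbreviations
  set g : (∀ w, D w) → V → ℝ :=
    fun y j => ∑ u ∈ AP j, (f j u (y j) (y u) + f u j (y u) (y j)) with hg
  have hgnn : ∀ y j, 0 ≤ g y j := fun y j =>
    Finset.sum_nonneg fun u _ => add_nonneg (hf _ _ _ _) (hf _ _ _ _)
  suffices H : ∀ n (c v : V), (cuS p c).card ≤ n → p c = some v →
      ∀ y : ∀ w, D w, ChildUtil v c y ≤ ∑ j ∈ cuS p c, g y j by
    intro v c hcv y
    have := H (cuS p c).card c v le_rfl hcv y
    simpa [cuS, hg] using this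
  intro n
  induction n with
  | zero =>
    intro c v hcard _ _
    exact absurd (Finset.card_pos.mpr ⟨c, cu_mem_self p c⟩) (by omega)
  | succ n ih =>
    intro c v hcard hcv y
    -- step 1 : ChildUtil v c y ≤ f v c (y v) (y c) + util c y
    have h1 : ChildUtil v c y ≤ f v c (y v) (y c) + util c y := by
      rw [hchild]
      have := Finset.inf'_le
        (fun xc : D c => f v c (y v) xc + util c (Function.update y c xc))
        (Finset.mem_univ (y c))
      simpa only [Function.update_eq_self] using this
    -- children of c
    set Ch : Finset V := Finset.univ.filter (fun c' => p c' = some c) with hCh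
    have hchmem : ∀ c' ∈ Ch, p c' = some c := by
      intro c' hc'; simpa [hCh] using hc'
    -- step 2 : bound the children sums by IH
    have h2 : ∑ c' ∈ Ch, ChildUtil c c' y ≤ ∑ c' ∈ Ch, ∑ j ∈ cuS p c', g y j := by
      refine Finset.sum_le_sum fun c' hc' => ?_
      have hpc' := hchmem c' hc'
      have hsub := cu_subset p hwf hpc'
      have hlt : (cuS p c').card ≤ n := by
        have := Finset.card_le_card hsub
        rw [Finset.card_erase_of_mem (cu_mem_self p c)] at this
        omega
      exact ih c' c hlt hpc' y
    -- step 3 : children subtrees are disjoint pieces of (cuS p c).erase c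
    have h3 : ∑ c' ∈ Ch, ∑ j ∈ cuS p c', g y j ≤ ∑ j ∈ (cuS p c).erase c, g y j := by
      rw [← Finset.sum_biUnion (fun c1 h1 c2 h2 hne =>
        cu_disj p hwf (hchmem c1 h1) (hchmem c2 h2) hne)]
      refine Finset.sum_le_sum_of_subset_of_nonneg ?_ (fun j _ _ => hgnn y j)
      intro j hj
      rw [Finset.mem_biUnion] at hj
      obtain ⟨c', hc', hjc'⟩ := hj
      exact cu_subset p hwf (hchmem c' hc') hjc'
    -- step 4 : the local part
    have h4 : f v c (y v) (y c) + (∑ u ∈ AP c, f c u (y c) (y u)) ≤ g y c := by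
      rw [hg]
      simp only [Finset.sum_add_distrib]
      rw [add_comm]
      gcongr
      exact Finset.single_le_sum (f := fun u => f u c (y u) (y c))
        (fun u _ => hf _ _ _ _) (hAPparent c v hcv)
    calc ChildUtil v c y ≤ f v c (y v) (y c) + util c y := h1
      _ = (f v c (y v) (y c) + ∑ u ∈ AP c, f c u (y c) (y u))
            + ∑ c' ∈ Ch, ChildUtil c c' y := by rw [hutil]; ring
      _ ≤ g y c + ∑ j ∈ (cuS p c).erase c, g y j := by
          exact add_le_add h4 (h2.trans h3)
      _ = ∑ j ∈ cuS p c, g y j := Finset.add_sum_erase _ _ (cu_mem_self p c)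
end
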